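/- Let I be an interval, Λ ⊆ ℝ² open, and Φ = (Φ₁, Φ₂) : I × Λ → ℍ a C¹ diffeomorphism onto Ω ⊆ ℍ such that every curve Φ(·,p) is legendrian (∂_s Φ₂ = −2 Im(conj(Φ₁) ∂_s Φ₁)). Then the Jacobian determinant of Φ (as a map into ℝ³ ≅ ℂ × ℝ) satisfies J_Φ = −Im( conj(∂_s Φ₁) · A ) where A = ∂_{p₁}Φ₂ ∂_{p₂}Φ₁ − ∂_{p₂}Φ₂ ∂_{p₁}Φ₁ + 2 Φ₁ Im( ∂_{p₁}Φ₁ conj(∂_{p₂}Φ₁) ). -/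

import Mathlib

open Set Complex Matrix

/-- `∂_s` of a function on `I × Λ ⊆ ℝ × ℝ²` with values in `ℂ`. -/
noncomputable def pdS (f : ℝ × (ℝ × ℝ) → ℂ) (x : ℝ × (ℝ × ℝ)) : ℂ :=
  deriv (fun s => f (s, x.2)) x.1

/-- `∂_{p₁}`. -/
noncomputable def pd1 (f : ℝ × (ℝ × ℝ) → ℂ) (x : ℝ × (ℝ × ℝ)) : ℂ :=
  deriv (fun t => f (x.1, (t, x.2.2))) x.2.1

/-- `∂_{p₂}`. -/
noncomputable def pd2 (f : ℝ × (ℝ × ℝ) → ℂ) (x : ℝ × (ℝ × ℝ)) : ℂ :=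
  deriv (fun t => f (x.1, (x.2.1, t))) x.2.2

/-- The function `A = ∂_{p₁}Φ₂ ∂_{p₂}Φ₁ − ∂_{p₂}Φ₂ ∂_{p₁}Φ₁ + 2Φ₁ Im(∂_{p₁}Φ₁ conj(∂_{p₂}Φ₁))`. -/
noncomputable def funA (Φ₁ : ℝ × (ℝ × ℝ) → ℂ) (Φ₂ : ℝ × (ℝ × ℝ) → ℝ)
    (x : ℝ × (ℝ × ℝ)) : ℂ :=
  pd1 (fun y => (Φ₂ y : ℂ)) x * pd2 Φ₁ x - pd2 (fun y => (Φ₂ y : ℂ)) x * pd1 Φ₁ x +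
    2 * Φ₁ x * (((pd1 Φ₁ x * (starRingEnd ℂ) (pd2 Φ₁ x)).im : ℝ) : ℂ)


lemma deriv_ofReal_comp' (f : ℝ → ℝ) (t : ℝ) :
    deriv (fun s => Complex.ofReal (f s)) t = Complex.ofReal (deriv f t) := by
  by_cases h : DifferentiableAt ℝ f t
  · exact h.hasDerivAt.ofReal_comp.deriv
  · rw [deriv_zero_of_not_differentiableAt h, deriv_zero_of_not_differentiableAt]
    · simp
    · intro h'
      exact h (by
        have h'' : DifferentiableAt ℝ (fun s => Complex.reCLM ((f s : ℂ))) t :=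
          Complex.reCLM.differentiableAt.comp t h'
        simpa using h'')

/-- If `Φ = (Φ₁, Φ₂) : I × Λ → ℍ` is a C¹ diffeomorphism onto `Ω` whose curves `Φ(·,p)`
are legendrian, then its Jacobian determinant satisfies `J_Φ = −Im(conj(∂_s Φ₁)·A)`. -/
theorem stmt17 (a b : ℝ) (Λ : Set (ℝ × ℝ)) (hΛ : IsOpen Λ) (Ω : Set (ℂ × ℝ))
    (Φ₁ : ℝ × (ℝ × ℝ) → ℂ) (Φ₂ : ℝ × (ℝ × ℝ) → ℝ)
    (hΦ : ContDiffOn ℝ 1 (fun x => (Φ₁ x, Φ₂ x)) (Set.Ioo a b ×ˢ Λ))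
    (hbij : Set.BijOn (fun x => (Φ₁ x, Φ₂ x)) (Set.Ioo a b ×ˢ Λ) Ω)
    (hleg : ∀ x ∈ Set.Ioo a b ×ˢ Λ,
      pdS (fun y => (Φ₂ y : ℂ)) x = -2 * (((starRingEnd ℂ) (Φ₁ x) * pdS Φ₁ x).im : ℝ)) :
    ∀ x ∈ Set.Ioo a b ×ˢ Λ,
      Matrix.det !![(pdS Φ₁ x).re, (pd1 Φ₁ x).re, (pd2 Φ₁ x).re;
                    (pdS Φ₁ x).im, (pd1 Φ₁ x).im, (pd2 Φ₁ x).im;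
                    (pdS (fun y => (Φ₂ y : ℂ)) x).re, (pd1 (fun y => (Φ₂ y : ℂ)) x).re,
                      (pd2 (fun y => (Φ₂ y : ℂ)) x).re]
        = -((starRingEnd ℂ) (pdS Φ₁ x) * funA Φ₁ Φ₂ x).im := by
  intro x hx
  have hS := hleg x hx
  have h1 : pd1 (fun y => (Φ₂ y : ℂ)) x
      = Complex.ofReal (deriv (fun t => Φ₂ (x.1, (t, x.2.2))) x.2.1) := deriv_ofReal_comp' _ _
  have h2 : pd2 (fun y => (Φ₂ y : ℂ)) x
      = Complex.ofReal (deriv (fun t => Φ₂ (x.1, (x.2.1, t))) x.2.2) := deriv_ofReal_comp' _ _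
  simp [Matrix.det_fin_three, funA, hS, h1, h2, Complex.mul_im, Complex.mul_re,
    Complex.conj_re, Complex.conj_im, Complex.add_im, Complex.add_re, Complex.sub_im,
    Complex.sub_re]
  ring
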